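/- Let G be a unicyclic graph with unique cycle C_{2n+1} = (x_1,...,x_{2n+1}) and edge ideal I = I(G). Then I^(n+1) = I^{n+1} + (x_1⋯x_{2n+1}). -/

import Mathlib

open MvPolynomial

/-- The edge ideal of a graph. -/
noncomputable def edgeIdeal (K : Type*) [Field K] {V : Type*} (G : SimpleGraph V) :
    Ideal (MvPolynomial V K) :=
  Ideal.span {f | ∃ u v, G.Adj u v ∧ f = X u * X v}

/-- The `s`-th symbolic power: the intersection of `s`-th powers of the
associated primes of `R/I`. -/
noncomputable def symbolicPower {R : Type*} [CommRing R] (I : Ideal R) (s : ℕ) : Ideal R :=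
  ⨅ p ∈ associatedPrimes R (R ⧸ I), p ^ s

/-- `G` has `x 0, x 1, ..., x (2n)` as its unique cycle. -/
def HasUniqueOddCycle {V : Type*} (G : SimpleGraph V) (n : ℕ) (x : Fin (2 * n + 1) → V) : Prop :=
  1 ≤ n ∧ Function.Injective x ∧ (∀ i, G.Adj (x i) (x (i + 1))) ∧
    ∀ (v : V) (c : G.Walk v v), c.IsCycle →
      {e | e ∈ c.edges} = Set.range (fun i : Fin (2 * n + 1) => s(x i, x (i + 1)))

namespace UniCyc
variable {K : Type*} [Field K] {V : Type*}

/-- weight of a monomial exponent on a set of variables -/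
noncomputable def wt (C : Set V) (μ : V →₀ ℕ) : ℕ := ∑ v ∈ μ.support, C.indicator ⇑μ v

lemma wt_eq_sum_subset (C : Set V) (μ : V →₀ ℕ) {s : Finset V} (hs : μ.support ⊆ s) :
    wt C μ = ∑ v ∈ s, C.indicator ⇑μ v := by
  refine Finset.sum_subset hs fun v _ hv => ?_
  have : μ v = 0 := Finsupp.notMem_support_iff.mp hv
  simp [Set.indicator, this]

lemma wt_add (C : Set V) (μ ν : V →₀ ℕ) : wt C (μ + ν) = wt C μ + wt C ν := by
  classical
  rw [wt_eq_sum_subset C (μ + ν) (s := μ.support ∪ ν.support) Finsupp.support_add,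
    wt_eq_sum_subset C μ (s := μ.support ∪ ν.support) Finset.subset_union_left,
    wt_eq_sum_subset C ν (s := μ.support ∪ ν.support) Finset.subset_union_right,
    ← Finset.sum_add_distrib]
  refine Finset.sum_congr rfl fun v _ => ?_
  by_cases h : v ∈ C <;> simp [Set.indicator, h]

lemma wt_mono (C : Set V) {d μ : V →₀ ℕ} (h : d ≤ μ) : wt C d ≤ wt C μ := by
  rw [wt_eq_sum_subset C d (s := μ.support), wt_eq_sum_subset C μ (s := μ.support) le_rfl]
  · refine Finset.sum_le_sum fun v _ => ?_
    by_cases hc : v ∈ C <;> simp [Set.indicator, hc, Finsupp.le_def.mp h v]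
  · intro v hv
    rw [Finsupp.mem_support_iff] at hv ⊢
    exact fun h0 => hv (Nat.le_zero.mp (h0 ▸ Finsupp.le_def.mp h v))

lemma wt_single_of_mem {C : Set V} {c : V} (hc : c ∈ C) : wt C (Finsupp.single c 1) = 1 := by
  rw [wt_eq_sum_subset C _ (s := {c}) Finsupp.support_single_subset]
  simp [Set.indicator, hc]

lemma exists_mem_of_wt_pos {C : Set V} {μ : V →₀ ℕ} (h : 0 < wt C μ) : ∃ c ∈ C, μ c ≠ 0 := by
  by_contra hc
  push_neg at hc
  have : wt C μ = 0 := Finset.sum_eq_zero fun v hv => by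
    by_cases h' : v ∈ C
    · simp [Set.indicator, h', hc v h']
    · simp [Set.indicator, h']
  omega

/-- the prime generated by the variables in `C` -/
noncomputable def PC (K : Type*) [Field K] (C : Set V) : Ideal (MvPolynomial V K) :=
  Ideal.span (X '' C)

lemma monomial_mem_PC_pow {C : Set V} {k : ℕ} {μ : V →₀ ℕ} (h : k ≤ wt C μ) (a : K) :
    monomial μ a ∈ PC K C ^ k := by
  induction k generalizing μ with
  | zero => simp
  | succ k ih =>
    obtain ⟨c, hcC, hc⟩ := exists_mem_of_wt_pos (C := C) (μ := μ) (by omega)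
    have hle : Finsupp.single c 1 ≤ μ := by
      rw [Finsupp.single_le_iff]; omega
    obtain ⟨ν, rfl⟩ : ∃ ν, μ = Finsupp.single c 1 + ν := by
      exact ⟨μ - Finsupp.single c 1, by rw [add_comm, tsub_add_cancel_of_le hle]⟩
    have hwt : k ≤ wt C ν := by
      rw [wt_add, wt_single_of_mem hcC] at h; omega
    have : monomial (Finsupp.single c 1 + ν) a = X c * monomial ν a := by
      rw [X, monomial_mul, one_mul]
    rw [this, pow_succ, mul_comm (PC K C ^ k)]
    exact Ideal.mul_mem_mul (Ideal.subset_span ⟨c, hcC, rfl⟩) (ih hwt)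

lemma PC_pow_le_span (C : Set V) (k : ℕ) :
    PC K C ^ k ≤ Ideal.span ((fun d => monomial d (1 : K)) '' {d | k ≤ wt C d}) := by
  induction k with
  | zero =>
    refine le_of_eq_of_le (pow_zero _) ?_
    rw [Ideal.one_eq_top, ← Ideal.span_singleton_one (α := MvPolynomial V K)]
    refine Ideal.span_mono ?_
    rintro _ rfl
    exact ⟨0, by simp, by simp⟩
  | succ k ih =>
    rw [pow_succ, mul_comm]
    calc PC K C * PC K C ^ k ≤
        PC K C * Ideal.span ((fun d => monomial d (1 : K)) '' {d | k ≤ wt C d}) :=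
          Ideal.mul_mono_right ih
      _ ≤ _ := by
          rw [PC, Ideal.span_mul_span]
          refine Ideal.span_le.mpr ?_
          rintro f hf
          simp only [Set.mem_mul] at hf
          obtain ⟨_, ⟨c, hcC, rfl⟩, _, ⟨d, hd, rfl⟩, hf⟩ := hf
          subst hf
          refine Ideal.subset_span ⟨Finsupp.single c 1 + d, ?_, ?_⟩
          · have := wt_single_of_mem (C := C) hcC
            simp only [Set.mem_setOf_eq] at hd ⊢
            rw [wt_add, this]; omega
          · rw [X, monomial_mul, one_mul]

lemma mem_PC_pow_iff {C : Set V} {k : ℕ} {f : MvPolynomial V K} :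
    f ∈ PC K C ^ k ↔ ∀ μ ∈ f.support, k ≤ wt C μ := by
  constructor
  · intro hf μ hμ
    have := PC_pow_le_span (K := K) C k hf
    rw [mem_ideal_span_monomial_image] at this
    obtain ⟨d, hd, hdμ⟩ := this μ hμ
    exact le_trans hd (wt_mono C hdμ)
  · intro h
    rw [← support_sum_monomial_coeff f]
    exact Ideal.sum_mem _ fun μ hμ => monomial_mem_PC_pow (h μ hμ) _

end UniCyc


namespace UniCyc
variable {K : Type*} [Field K] {V : Type*}

open Classical in
/-- the map killing the variables in C -/
noncomputable def killC (K : Type*) [Field K] {V : Type*} (C : Set V) :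
    MvPolynomial V K →ₐ[K] MvPolynomial ↥(Cᶜ) K :=
  aeval (fun v => if h : v ∈ C then 0 else X ⟨v, Set.mem_compl h⟩)

lemma killC_X_of_not_mem {C : Set V} {v : V} (h : v ∉ C) :
    killC K C (X v) = X ⟨v, Set.mem_compl h⟩ := by
  rw [killC, aeval_X, dif_neg h]

lemma killC_ker (C : Set V) : RingHom.ker (killC K C) = PC K C := by
  classical
  refine le_antisymm ?_ ?_
  · intro f hf
    rw [RingHom.mem_ker] at hf
    set T : Finset (V →₀ ℕ) := f.support.filter (fun μ => ∀ v ∈ C, μ v = 0) with hT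
    set f₁ : MvPolynomial V K := ∑ μ ∈ T, monomial μ (coeff μ f) with hf₁
    set f₂ : MvPolynomial V K := ∑ μ ∈ f.support \ T, monomial μ (coeff μ f) with hf₂
    have hsplit : f = f₁ + f₂ := by
      rw [hf₁, hf₂, ← Finset.sum_union (Finset.disjoint_sdiff),
        Finset.union_sdiff_of_subset (Finset.filter_subset _ _), support_sum_monomial_coeff]
    have hf₂mem : f₂ ∈ PC K C := by
      refine Ideal.sum_mem _ fun μ hμ => ?_
      simp only [Finset.mem_sdiff, hT, Finset.mem_filter, not_and, not_forall] at hμ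
      obtain ⟨hμs, hμ2⟩ := hμ
      obtain ⟨v, hvC, hv⟩ := hμ2 hμs
      rw [PC, mem_ideal_span_X_image]
      intro m hm
      have : m = μ := by
        have := support_monomial (a := coeff μ f) (s := μ)
        by_cases h0 : coeff μ f = 0
        · simp [h0] at hm
        · rw [this, if_neg h0] at hm; simpa using hm
      exact ⟨v, hvC, this ▸ hv⟩
    have hkill₂ : killC K C f₂ = 0 := by
      refine map_sum (killC K C) _ _ |>.trans (Finset.sum_eq_zero fun μ hμ => ?_)
      simp only [Finset.mem_sdiff, hT, Finset.mem_filter, not_and, not_forall] at hμ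
      obtain ⟨hμs, hμ2⟩ := hμ
      obtain ⟨v, hvC, hv⟩ := hμ2 hμs
      rw [killC, aeval_monomial, Finsupp.prod, Finset.prod_eq_zero (Finsupp.mem_support_iff.mpr hv)]
      · ring
      · rw [dif_pos hvC, zero_pow hv]
    have hf₁sup : f₁ ∈ supported K (Cᶜ : Set V) := by
      rw [mem_supported]
      intro v hv
      rw [Finset.mem_coe, mem_vars] at hv
      obtain ⟨d, hd, hvd⟩ := hv
      have hdT : d ∈ T := by
        have := MvPolynomial.support_sum (s := T) (f := fun μ => monomial μ (coeff μ f)) hd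
        simp only [Finset.mem_biUnion] at this
        obtain ⟨μ, hμT, hdμ⟩ := this
        have : d = μ := by
          have hsm := support_monomial (a := coeff μ f) (s := μ)
          by_cases h0 : coeff μ f = 0
          · simp [h0] at hdμ
          · rw [hsm, if_neg h0] at hdμ; simpa using hdμ
        exact this ▸ hμT
      rw [hT, Finset.mem_filter] at hdT
      intro hvC
      exact Finsupp.mem_support_iff.mp hvd (hdT.2 v hvC)
    obtain ⟨q, hq⟩ : f₁ ∈ (rename ((↑) : ↥(Cᶜ : Set V) → V)).range := by
      rw [← supported_eq_range_rename]; exact hf₁sup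
    have hkill₁ : killC K C f₁ = 0 := by
      have := congrArg (killC K C) hsplit
      rw [map_add, hkill₂, add_zero, hf] at this
      exact this.symm
    have hq' : rename ((↑) : ↥(Cᶜ : Set V) → V) q = f₁ := hq
    have hq0 : q = 0 := by
      have hcomp : (killC K C).comp (rename ((↑) : ↥(Cᶜ : Set V) → V)) =
          AlgHom.id K (MvPolynomial ↥(Cᶜ : Set V) K) := by
        apply MvPolynomial.algHom_ext
        intro v'
        have hv' : (v' : V) ∉ C := v'.2
        simp only [AlgHom.comp_apply, rename_X, AlgHom.id_apply, killC, aeval_X, dif_neg hv',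
          Subtype.coe_eta]
      have : q = killC K C f₁ := by
        rw [← hq']
        exact (congrArg (fun φ => φ q) hcomp).symm.trans rfl
      rw [this, hkill₁]
    have hf₁0 : f₁ = 0 := by rw [← hq', hq0, map_zero]
    rw [hsplit, hf₁0, zero_add]
    exact hf₂mem
  · rw [PC, Ideal.span_le]
    rintro _ ⟨c, hc, rfl⟩
    simp only [SetLike.mem_coe, RingHom.mem_ker]
    rw [killC, aeval_X, dif_pos hc]

instance PC_isPrime (C : Set V) : (PC K C).IsPrime := by
  rw [← killC_ker (K := K) C]
  exact RingHom.ker_isPrime _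

end UniCyc



namespace UniCyc
variable {K : Type*} [Field K] {V : Type*}

lemma X_mul_X (u v : V) : (X u : MvPolynomial V K) * X v =
    monomial (Finsupp.single u 1 + Finsupp.single v 1) 1 := by
  rw [X, X, monomial_mul, one_mul]

/-- edge ideal as a monomial ideal -/
lemma edgeIdeal_eq_span (G : SimpleGraph V) :
    edgeIdeal K G = Ideal.span ((fun d => monomial d (1 : K)) ''
      {d | ∃ u v, G.Adj u v ∧ d = Finsupp.single u 1 + Finsupp.single v 1}) := by
  rw [edgeIdeal]
  congr 1
  ext f
  constructor
  · rintro ⟨u, v, huv, rfl⟩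
    exact ⟨Finsupp.single u 1 + Finsupp.single v 1, ⟨u, v, huv, rfl⟩, (X_mul_X u v).symm⟩
  · rintro ⟨d, ⟨u, v, huv, rfl⟩, rfl⟩
    exact ⟨u, v, huv, (X_mul_X u v).symm⟩

/-- vertex covers -/
def IsCover (G : SimpleGraph V) (C : Set V) : Prop := ∀ ⦃u v⦄, G.Adj u v → u ∈ C ∨ v ∈ C

def IsMinCover (G : SimpleGraph V) (C : Set V) : Prop :=
  IsCover G C ∧ ∀ C' ⊆ C, IsCover G C' → C' = C

lemma exists_minCover_subset [Fintype V] (G : SimpleGraph V) :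
    ∀ (C : Set V), IsCover G C → ∃ C' ⊆ C, IsMinCover G C' := by
  have : ∀ (k : ℕ) (C : Set V), C.ncard ≤ k → IsCover G C → ∃ C' ⊆ C, IsMinCover G C' := by
    intro k
    induction k with
    | zero =>
      intro C hC hcov
      refine ⟨C, le_rfl, hcov, fun C' hsub hcov' => ?_⟩
      have : C = ∅ := Set.ncard_eq_zero (Set.toFinite C) |>.mp (by omega)
      subst this
      exact Set.subset_empty_iff.mp hsub
    | succ k ih =>
      intro C hC hcov
      by_cases hmin : ∀ C' ⊆ C, IsCover G C' → C' = C
      · exact ⟨C, le_rfl, hcov, hmin⟩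
      · push_neg at hmin
        obtain ⟨C'', hsub, hcov'', hne⟩ := hmin
        have hlt : C''.ncard < C.ncard := Set.ncard_lt_ncard (hsub.ssubset_of_ne hne)
          (Set.toFinite C)
        obtain ⟨C', hC', hmin⟩ := ih C'' (by omega) hcov''
        exact ⟨C', hC'.trans hsub, hmin⟩
  intro C hcov
  exact this C.ncard C le_rfl hcov

lemma IsMinCover.exists_adj_not_mem {G : SimpleGraph V} {C : Set V} (h : IsMinCover G C)
    {c : V} (hc : c ∈ C) : ∃ w, G.Adj c w ∧ w ∉ C := by
  by_contra hw
  push_neg at hw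
  have hcov' : IsCover G (C \ {c}) := by
    intro u v huv
    rcases h.1 huv with hu | hv
    · by_cases huc : u = c
      · subst huc
        right
        have := hw v huv
        exact ⟨this, fun hveq => G.irrefl (Set.mem_singleton_iff.mp hveq ▸ huv)⟩
      · exact Or.inl ⟨hu, huc⟩
    · by_cases hvc : v = c
      · subst hvc
        left
        have := hw u huv.symm
        exact ⟨this, fun hueq => G.irrefl (Set.mem_singleton_iff.mp hueq ▸ huv)⟩
      · exact Or.inr ⟨hv, hvc⟩
  have := h.2 (C \ {c}) Set.diff_subset hcov'
  exact absurd (this ▸ hc) (fun hmem => hmem.2 rfl)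

end UniCyc



namespace UniCyc
variable {K : Type*} [Field K] {V : Type*}

open Classical in
/-- exponent of the product of the variables outside `C` -/
noncomputable def compExp (V : Type*) [Fintype V] (C : Set V) : V →₀ ℕ :=
  ∑ v ∈ Finset.univ.filter (· ∉ C), Finsupp.single v 1

lemma compExp_apply_aux [Fintype V] (C : Set V) (w : V) [DecidablePred (· ∈ C)] :
    compExp V C w = if w ∈ C then 0 else 1 := by
  classical
  by_cases h : w ∈ C <;>
    simp [compExp, Finset.sum_apply', Finsupp.single_apply, h]

lemma compExp_apply_of_mem [Fintype V] {C : Set V} {w : V} (h : w ∈ C) :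
    compExp V C w = 0 := by
  classical rw [compExp_apply_aux, if_pos h]

lemma compExp_apply_of_not_mem [Fintype V] {C : Set V} {w : V} (h : w ∉ C) :
    compExp V C w = 1 := by
  classical rw [compExp_apply_aux, if_neg h]

lemma colon_iff [Fintype V] {G : SimpleGraph V} {C : Set V} (hmin : IsMinCover G C) (r : MvPolynomial V K) :
    r * monomial (compExp V C) 1 ∈ edgeIdeal K G ↔ r ∈ PC K C := by
  constructor
  · intro hr
    rw [PC, mem_ideal_span_X_image]
    intro μ hμ
    have hsup : μ + compExp V C ∈ (r * monomial (compExp V C) (1 : K)).support := by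
      rw [mem_support_iff, coeff_mul_monomial, mul_one]
      exact mem_support_iff.mp hμ
    rw [edgeIdeal_eq_span, mem_ideal_span_monomial_image] at hr
    obtain ⟨d, ⟨u, v, huv, rfl⟩, hle⟩ := hr _ hsup
    have hne : u ≠ v := huv.ne
    have key : ∀ c, c ∈ C → (Finsupp.single u 1 + Finsupp.single v 1 : V →₀ ℕ) c = 1 →
        μ c ≠ 0 := by
      intro c hc h1
      have := Finsupp.le_def.mp hle c
      rw [h1] at this
      have hec : compExp V C c = 0 := compExp_apply_of_mem hc
      simp only [Finsupp.add_apply, Finsupp.coe_add, Pi.add_apply] at this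
      omega
    rcases hmin.1 huv with hu | hv
    · refine ⟨u, hu, key u hu ?_⟩
      simp [Finsupp.single_apply, hne.symm]
    · refine ⟨v, hv, key v hv ?_⟩
      simp [Finsupp.single_apply, hne]
  · intro hr
    have base : ∀ c ∈ C, X c * monomial (compExp V C) (1 : K) ∈ edgeIdeal K G := by
      intro c hc
      obtain ⟨w, hcw, hwC⟩ := hmin.exists_adj_not_mem hc
      have hle : Finsupp.single w 1 ≤ compExp V C := by
        rw [Finsupp.single_le_iff, compExp_apply_of_not_mem hwC]
      obtain ⟨d, hd⟩ : ∃ d, compExp V C = Finsupp.single w 1 + d :=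
        ⟨compExp V C - Finsupp.single w 1, by rw [add_comm, tsub_add_cancel_of_le hle]⟩
      have : X c * monomial (compExp V C) (1 : K) = (X c * X w) * monomial d 1 := by
        rw [hd, X_mul_X, monomial_mul, one_mul, X, monomial_mul, one_mul, add_assoc]
      rw [this]
      exact Ideal.mul_mem_right _ _ (Ideal.subset_span ⟨c, w, hcw, rfl⟩)
    rw [PC] at hr
    induction hr using Submodule.span_induction with
    | mem f hf =>
      obtain ⟨c, hc, rfl⟩ := hf
      exact base c hc
    | zero => rw [zero_mul]; exact Ideal.zero_mem _
    | add a b _ _ ha hb => rw [add_mul]; exact Ideal.add_mem _ ha hb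
    | smul a r' _ hr' =>
      rw [smul_eq_mul, mul_assoc]
      exact Ideal.mul_mem_left _ _ hr'

lemma isAssociatedPrime_PC [Fintype V] {G : SimpleGraph V} {C : Set V} (hmin : IsMinCover G C)
    {I : Ideal (MvPolynomial V K)} (hI : I = edgeIdeal K G) :
    (PC K C) ∈ associatedPrimes (MvPolynomial V K) (MvPolynomial V K ⧸ I) := by
  refine ⟨PC_isPrime C, Ideal.Quotient.mk I (monomial (compExp V C) 1), ?_⟩
  have hcol : (⊥ : Submodule (MvPolynomial V K) (MvPolynomial V K ⧸ I)).colon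
      {Ideal.Quotient.mk I (monomial (compExp V C) 1)} = PC K C := by
    ext r
    rw [Submodule.mem_colon_singleton, Submodule.mem_bot]
    have hsmul : r • Ideal.Quotient.mk I (monomial (compExp V C) (1 : K)) =
        Ideal.Quotient.mk I (r * monomial (compExp V C) 1) := rfl
    rw [hsmul, Ideal.Quotient.eq_zero_iff_mem, hI, colon_iff hmin]
  rw [hcol, (PC_isPrime C).radical]

end UniCyc


namespace UniCyc
variable {K : Type*} [Field K] {V : Type*}

lemma le_of_mem_associatedPrimes {R : Type*} [CommRing R] {I p : Ideal R}
    (hp : p ∈ associatedPrimes R (R ⧸ I)) : I ≤ p := by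
  obtain ⟨hprime, y, hy⟩ := hp
  intro a ha
  rw [hy]
  refine Ideal.le_radical ?_
  rw [Submodule.mem_colon_singleton, Submodule.mem_bot]
  obtain ⟨b, rfl⟩ := Ideal.Quotient.mk_surjective y
  have : a • Ideal.Quotient.mk I b = Ideal.Quotient.mk I (a * b) := rfl
  rw [this, Ideal.Quotient.eq_zero_iff_mem]
  exact Ideal.mul_mem_right _ _ ha

lemma prod_mem_pow {R : Type*} [CommRing R] {p : Ideal R} {α : Type*} (s : Finset α)
    (g : α → R) (h : ∀ a ∈ s, g a ∈ p) : ∏ a ∈ s, g a ∈ p ^ s.card := by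
  classical
  induction s using Finset.induction with
  | empty => simp
  | insert a s hx ih =>
    rw [Finset.prod_insert hx, Finset.card_insert_of_notMem hx, pow_succ, mul_comm (p ^ s.card)]
    exact Ideal.mul_mem_mul (h a (Finset.mem_insert_self a s))
      (ih fun b hb => h b (Finset.mem_insert_of_mem hb))

lemma cycle_cover_card {n : ℕ} (S : Finset (Fin (2 * n + 1)))
    (h : ∀ i, i ∈ S ∨ i + 1 ∈ S) : n + 1 ≤ S.card := by
  have hinj : Set.InjOn (fun i : Fin (2 * n + 1) => i + 1) ↑Sᶜ := fun i _ j _ hij => add_right_cancel hij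
  have hmap : ∀ i ∈ Sᶜ, i + 1 ∈ S := by
    intro i hi
    rcases h i with hi' | hi'
    · exact absurd hi' (Finset.mem_compl.mp hi)
    · exact hi'
  have hcard : Sᶜ.card ≤ S.card := Finset.card_le_card_of_injOn _ hmap hinj
  have htot : S.card + Sᶜ.card = 2 * n + 1 := by
    rw [Finset.card_add_card_compl]
    simp
  omega

lemma easy_direction [Fintype V] {n : ℕ} {G : SimpleGraph V} {x : Fin (2 * n + 1) → V}
    (hadj : ∀ i, G.Adj (x i) (x (i + 1))) {I : Ideal (MvPolynomial V K)}
    (hI : I = edgeIdeal K G) {p : Ideal (MvPolynomial V K)}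
    (hp : p ∈ associatedPrimes (MvPolynomial V K) (MvPolynomial V K ⧸ I)) :
    I ^ (n + 1) + Ideal.span {∏ i, X (x i)} ≤ p ^ (n + 1) := by
  classical
  have hIp : I ≤ p := le_of_mem_associatedPrimes hp
  refine sup_le (Ideal.pow_right_mono hIp _) ?_
  rw [Ideal.span_le, Set.singleton_subset_iff]
  set S : Finset (Fin (2 * n + 1)) := Finset.univ.filter (fun i => X (x i) ∈ p) with hS
  have hor : ∀ i, i ∈ S ∨ i + 1 ∈ S := by
    intro i
    have hedge : (X (x i) : MvPolynomial V K) * X (x (i + 1)) ∈ p := by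
      refine hIp ?_
      rw [hI, edgeIdeal]
      exact Ideal.subset_span ⟨x i, x (i + 1), hadj i, rfl⟩
    rcases hp.1.mem_or_mem hedge with h | h
    · exact Or.inl (by simp [hS, h])
    · exact Or.inr (by simp [hS, h])
  have hcard := cycle_cover_card S hor
  have hsplit : (∏ i, X (x i) : MvPolynomial V K) =
      (∏ i ∈ S, X (x i)) * ∏ i ∈ Sᶜ, X (x i) := (Finset.prod_mul_prod_compl S _).symm
  have hmem : (∏ i ∈ S, X (x i) : MvPolynomial V K) ∈ p ^ (n + 1) := by
    refine Ideal.pow_le_pow_right hcard ?_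
    exact prod_mem_pow S _ fun i hi => by simpa [hS] using (Finset.mem_filter.mp hi).2
  rw [hsplit]
  exact Ideal.mul_mem_right _ _ hmem

end UniCyc


namespace UniCyc
variable {V : Type*}

lemma isAcyclic_mono {H G : SimpleGraph V} (hle : H ≤ G) (hG : G.IsAcyclic) : H.IsAcyclic :=
  fun _ c hc => hG (c.mapLe hle) (hc.mapLe hle)

lemma exists_leaf [Fintype V] {H : SimpleGraph V} (hac : H.IsAcyclic)
    {a₀ b₀ : V} (h₀ : H.Adj a₀ b₀) :
    ∃ u v, H.Adj u v ∧ ∀ w, H.Adj u w → w = v := by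
  classical
  set S : Set ℕ := {l | ∃ (a b : V) (p : H.Walk a b), p.IsPath ∧ p.length = l} with hSdef
  have hne : 1 ∈ S := by
    refine ⟨a₀, b₀, SimpleGraph.Walk.cons h₀ SimpleGraph.Walk.nil, ?_, rfl⟩
    rw [SimpleGraph.Walk.cons_isPath_iff]
    simp [h₀.ne]
  have hbdd : BddAbove S := by
    refine ⟨Fintype.card V, ?_⟩
    rintro l ⟨a, b, p, hp, rfl⟩
    exact hp.length_lt.le
  have hLS : sSup S ∈ S := Nat.sSup_mem ⟨1, hne⟩ hbdd
  have hL1 : 1 ≤ sSup S := le_csSup hbdd hne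
  obtain ⟨a, b, p, hp, hlen⟩ := hLS
  cases p with
  | nil => simp at hlen; omega
  | cons hadj q =>
    rename_i a'
    rw [SimpleGraph.Walk.cons_isPath_iff] at hp
    refine ⟨a, a', hadj, ?_⟩
    intro w hw
    by_contra hwne
    have hwa : w ≠ a := hw.ne'
    by_cases hws : w ∈ (SimpleGraph.Walk.cons hadj q).support
    · -- creates a cycle
      set r := (SimpleGraph.Walk.cons hadj q).takeUntil w hws with hr
      have hrpath : r.IsPath := by
        have : (SimpleGraph.Walk.cons hadj q).IsPath := by
          rw [SimpleGraph.Walk.cons_isPath_iff]; exact hp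
        exact this.takeUntil hws
      have hedge : s(w, a) ∉ r.edges := by
        intro hmem
        have hmem' := SimpleGraph.Walk.edges_takeUntil_subset _ hws hmem
        rw [SimpleGraph.Walk.edges_cons, List.mem_cons] at hmem'
        rcases hmem' with h1 | h2
        · rw [Sym2.eq_iff] at h1
          rcases h1 with ⟨rfl, rfl⟩ | ⟨h1a, h1b⟩
          · exact hwa rfl
          · exact hwne h1a
        · exact hp.2 (SimpleGraph.Walk.snd_mem_support_of_mem_edges q h2)
      have hcyc : (SimpleGraph.Walk.cons hw.symm r).IsCycle := by
        rw [SimpleGraph.Walk.cons_isCycle_iff]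
        exact ⟨hrpath, hedge⟩
      exact hac _ hcyc
    · -- extends the path
      have hpath : (SimpleGraph.Walk.cons hw.symm (SimpleGraph.Walk.cons hadj q)).IsPath := by
        rw [SimpleGraph.Walk.cons_isPath_iff]
        refine ⟨?_, hws⟩
        rw [SimpleGraph.Walk.cons_isPath_iff]; exact hp
      have hmem : (SimpleGraph.Walk.cons hw.symm (SimpleGraph.Walk.cons hadj q)).length ∈ S :=
        ⟨w, b, _, hpath, rfl⟩
      have := le_csSup hbdd hmem
      simp only [SimpleGraph.Walk.length_cons] at this hlen
      omega

end UniCyc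

namespace UniCyc
variable {K : Type*} [Field K] {V : Type*}

lemma wt_le_of_zero {C C' : Set V} {μ : V →₀ ℕ} (h : ∀ v ∈ C', v ∈ C ∨ μ v = 0) :
    wt C' μ ≤ wt C μ := by
  refine Finset.sum_le_sum fun v hv => ?_
  by_cases hvC' : v ∈ C'
  · rcases h v hvC' with hvC | hv0
    · simp [Set.indicator, hvC', hvC]
    · simp [Set.indicator, hv0]
  · simp [Set.indicator, hvC']

lemma wt_subset {C C' : Set V} (h : C ⊆ C') (μ : V →₀ ℕ) : wt C μ ≤ wt C' μ := by
  refine Finset.sum_le_sum fun v hv => ?_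
  by_cases hvC : v ∈ C
  · simp [Set.indicator, hvC, h hvC]
  · simp [Set.indicator, hvC]

lemma wt_remove {D : Set V} {u : V} (hu : u ∈ D) (μ : V →₀ ℕ) :
    wt D μ = wt (D \ {u}) μ + μ u := by
  classical
  have hpt : ∀ v, D.indicator ⇑μ v = (D \ {u}).indicator ⇑μ v + if v = u then μ u else 0 := by
    intro v
    by_cases hvu : v = u
    · subst hvu
      simp [Set.indicator, hu]
    · by_cases hvD : v ∈ D <;> simp [Set.indicator, hvD, hvu]
  rw [wt, Finset.sum_congr rfl (fun v _ => hpt v), Finset.sum_add_distrib, ← wt]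
  congr 1
  rw [Finset.sum_ite_eq' μ.support u (fun _ => μ u)]
  by_cases h : u ∈ μ.support
  · rw [if_pos h]
  · rw [if_neg h, Finsupp.notMem_support_iff.mp h]

lemma wt_zero_set {C : Set V} {μ : V →₀ ℕ} (h : ∀ v ∈ C, μ v = 0) : wt C μ = 0 := by
  refine Finset.sum_eq_zero fun v hv => ?_
  by_cases hvC : v ∈ C
  · simp [Set.indicator, hvC, h v hvC]
  · simp [Set.indicator, hvC]

lemma wt_single_of_not_mem {C : Set V} {c : V} (hc : c ∉ C) : wt C (Finsupp.single c 1) = 0 :=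
  wt_zero_set fun v hv => by
    classical
    rw [Finsupp.single_apply_eq_zero]
    intro h
    exact absurd (h ▸ hv) hc

lemma edgeIdeal_mono {H G : SimpleGraph V} (h : H ≤ G) : edgeIdeal K H ≤ edgeIdeal K G := by
  refine Ideal.span_mono ?_
  rintro f ⟨u, v, huv, rfl⟩
  exact ⟨u, v, h huv, rfl⟩

/-- weighted König theorem for forests -/
lemma konig [Fintype V] (k : ℕ) :
    ∀ (μ : V →₀ ℕ) (H : SimpleGraph V), H.IsAcyclic →
    (∀ D : Set V, IsCover H D → k ≤ wt D μ) →
    ∀ a : K, monomial μ a ∈ edgeIdeal K H ^ k := by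
  induction k with
  | zero => intro μ H _ _ a; simp
  | succ k ih =>
    intro μ H hac hcov a
    set H' : SimpleGraph V :=
      { Adj := fun p q => H.Adj p q ∧ μ p ≠ 0 ∧ μ q ≠ 0
        symm := ⟨fun p q ⟨h, hp, hq⟩ => ⟨h.symm, hq, hp⟩⟩
        loopless := ⟨fun p h => H.loopless.irrefl p h.1⟩ } with hH'
    have hH'le : H' ≤ H := fun p q h => h.1
    have hH'ac : H'.IsAcyclic := isAcyclic_mono hH'le hac
    have hedge : ∃ p q, H'.Adj p q := by
      by_contra h
      push_neg at h
      have hcov0 : IsCover H {v | μ v = 0} := by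
        intro p q hpq
        by_contra hboth
        push_neg at hboth
        exact h p q ⟨hpq, hboth.1, hboth.2⟩
      have h1 := hcov _ hcov0
      have h0 : wt {v | μ v = 0} μ = 0 := wt_zero_set fun v hv => hv
      omega
    obtain ⟨p₀, q₀, h₀⟩ := hedge
    obtain ⟨u, v, huv, huniq⟩ := exists_leaf hH'ac h₀
    have hu : μ u ≠ 0 := huv.2.1
    have hv : μ v ≠ 0 := huv.2.2
    have hHuv : H.Adj u v := huv.1
    have hune : u ≠ v := hHuv.ne
    set δ : V →₀ ℕ := Finsupp.single u 1 + Finsupp.single v 1 with hδ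
    have hδle : δ ≤ μ := by
      rw [Finsupp.le_def]
      intro w
      have h1 : 1 ≤ μ u := Nat.one_le_iff_ne_zero.mpr hu
      have h2 : 1 ≤ μ v := Nat.one_le_iff_ne_zero.mpr hv
      rw [hδ]
      classical
      simp only [Finsupp.coe_add, Pi.add_apply, Finsupp.single_apply]
      split_ifs with hA hB hB
      · exact absurd (hA.trans hB.symm) hune
      · subst hA; omega
      · subst hB; omega
      · omega
    set μ' := μ - δ with hμ'
    have hμeq : μ' + δ = μ := tsub_add_cancel_of_le hδle
    have hwtδ : ∀ D : Set V, wt D μ = wt D μ' + wt D δ := by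
      intro D
      rw [← hμeq, wt_add]
    have hcov' : ∀ D : Set V, IsCover H D → k ≤ wt D μ' := by
      intro D hD
      have hwtδD : wt D δ = wt D (Finsupp.single u 1) + wt D (Finsupp.single v 1) := wt_add _ _ _
      by_cases huD : u ∈ D <;> by_cases hvD : v ∈ D
      · -- both endpoints in the cover: use the leaf property
        set D'' : Set V := (D \ {u}) ∪ {w | μ w = 0} with hD''
        have hD''cov : IsCover H D'' := by
          intro p q hpq
          by_cases hp0 : μ p = 0
          · exact Or.inl (Or.inr hp0)
          · by_cases hq0 : μ q = 0
            · exact Or.inr (Or.inr hq0)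
            · have hpq' : H'.Adj p q := ⟨hpq, hp0, hq0⟩
              by_cases hpu : p = u
              · subst hpu
                have : q = v := huniq q hpq'
                subst this
                exact Or.inr (Or.inl ⟨hvD, fun h => hune (Set.mem_singleton_iff.mp h).symm⟩)
              · by_cases hqu : q = u
                · subst hqu
                  have : p = v := huniq p hpq'.symm
                  subst this
                  exact Or.inl (Or.inl ⟨hvD, fun h => hune (Set.mem_singleton_iff.mp h).symm⟩)
                · rcases hD hpq with h | h
                  · exact Or.inl (Or.inl ⟨h, hpu⟩)
                  · exact Or.inr (Or.inl ⟨h, hqu⟩)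
        have h1 : k + 1 ≤ wt D'' μ := hcov D'' hD''cov
        have h2 : wt D'' μ ≤ wt (D \ {u}) μ := by
          refine wt_le_of_zero fun w hw => ?_
          rcases hw with h | h
          · exact Or.inl h
          · exact Or.inr h
        have h3 : wt D μ = wt (D \ {u}) μ + μ u := wt_remove huD μ
        have h4 : wt D δ = 2 := by
          rw [hwtδD, wt_single_of_mem huD, wt_single_of_mem hvD]
        have h5 := hwtδ D
        have h6 : 1 ≤ μ u := Nat.one_le_iff_ne_zero.mpr hu
        omega
      · have h4 : wt D δ = 1 := by
          rw [hwtδD, wt_single_of_mem huD, wt_single_of_not_mem hvD]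
        have h1 := hcov D hD
        have h5 := hwtδ D
        omega
      · have h4 : wt D δ = 1 := by
          rw [hwtδD, wt_single_of_not_mem huD, wt_single_of_mem hvD]
        have h1 := hcov D hD
        have h5 := hwtδ D
        omega
      · rcases hD hHuv with h | h
        · exact absurd h huD
        · exact absurd h hvD
    have hmem := ih μ' H hac hcov' a
    have hfact : monomial μ a = (X u * X v) * monomial μ' a := by
      rw [X_mul_X, monomial_mul, one_mul, ← hδ, add_comm δ μ', hμeq]
    rw [hfact, pow_succ, mul_comm (edgeIdeal K H ^ k)]
    exact Ideal.mul_mem_mul (Ideal.subset_span ⟨u, v, hHuv, rfl⟩) hmem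

end UniCyc

namespace UniCyc
variable {K : Type*} [Field K] {V : Type*}

lemma prod_X_eq_monomial {ι : Type*} (s : Finset ι) (g : ι → V) :
    ∏ i ∈ s, (X (g i) : MvPolynomial V K) =
      monomial (∑ i ∈ s, Finsupp.single (g i) 1) 1 := by
  classical
  induction s using Finset.induction with
  | empty => simp [monomial_zero']
  | insert i s hx ih =>
    rw [Finset.prod_insert hx, Finset.sum_insert hx, ih, X, monomial_mul, one_mul]

/-- the exponent of the cycle monomial -/
noncomputable def cycExp {n : ℕ} (x : Fin (2 * n + 1) → V) : V →₀ ℕ :=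
  ∑ i, Finsupp.single (x i) 1

lemma cycExp_le {n : ℕ} {x : Fin (2 * n + 1) → V} (hinj : Function.Injective x)
    {μ : V →₀ ℕ} (hall : ∀ i, μ (x i) ≠ 0) : cycExp x ≤ μ := by
  classical
  rw [Finsupp.le_def]
  intro w
  rw [cycExp, Finset.sum_apply']
  rw [Finset.sum_congr rfl fun i _ => Finsupp.single_apply]
  by_cases hw : ∃ i, x i = w
  · obtain ⟨i₀, rfl⟩ := hw
    have : ∀ i, (if x i = x i₀ then 1 else 0) = if i = i₀ then 1 else 0 := by
      intro i
      by_cases h : i = i₀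
      · subst h; simp
      · rw [if_neg h, if_neg (fun hh => h (hinj hh))]
    rw [Finset.sum_congr rfl fun i _ => this i, Finset.sum_ite_eq' Finset.univ i₀ (fun _ => 1),
      if_pos (Finset.mem_univ _)]
    exact Nat.one_le_iff_ne_zero.mpr (hall i₀)
  · push_neg at hw
    have : ∀ i ∈ Finset.univ, (if x i = w then 1 else 0) = 0 := by
      intro i _
      rw [if_neg (hw i)]
    rw [Finset.sum_congr rfl this, Finset.sum_const_zero]
    omega

lemma case_all_pos {n : ℕ} {x : Fin (2 * n + 1) → V} (hinj : Function.Injective x)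
    {μ : V →₀ ℕ} (hall : ∀ i, μ (x i) ≠ 0) (a : K) :
    monomial μ a ∈ Ideal.span {∏ i, (X (x i) : MvPolynomial V K)} := by
  rw [Ideal.mem_span_singleton', prod_X_eq_monomial]
  refine ⟨monomial (μ - cycExp x) a, ?_⟩
  rw [monomial_mul, mul_one]
  have hsum : μ - cycExp x + (∑ i, Finsupp.single (x i) 1) = μ := by
    rw [← cycExp]
    exact tsub_add_cancel_of_le (cycExp_le hinj hall)
  rw [hsum]

end UniCyc

namespace UniCyc
variable {K : Type*} [Field K] {V : Type*}

/-- the subgraph of edges with both endpoints in the support of `μ` -/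
def posG (G : SimpleGraph V) (μ : V →₀ ℕ) : SimpleGraph V where
  Adj p q := G.Adj p q ∧ μ p ≠ 0 ∧ μ q ≠ 0
  symm := ⟨fun p q h => ⟨h.1.symm, h.2.2, h.2.1⟩⟩
  loopless := ⟨fun p h => G.loopless.irrefl p h.1⟩

lemma posG_le (G : SimpleGraph V) (μ : V →₀ ℕ) : posG G μ ≤ G := fun _ _ h => h.1

lemma posG_acyclic {n : ℕ} {G : SimpleGraph V} {x : Fin (2 * n + 1) → V}
    (huni : HasUniqueOddCycle G n x) {μ : V →₀ ℕ} {i₀ : Fin (2 * n + 1)}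
    (h0 : μ (x i₀) = 0) : (posG G μ).IsAcyclic := by
  intro v c hc
  have hc' : (c.mapLe (posG_le G μ)).IsCycle := hc.mapLe _
  have hedges := huni.2.2.2 v (c.mapLe (posG_le G μ)) hc'
  have hmem : s(x i₀, x (i₀ + 1)) ∈ (c.mapLe (posG_le G μ)).edges := by
    have hr : s(x i₀, x (i₀ + 1)) ∈ Set.range (fun i : Fin (2 * n + 1) => s(x i, x (i + 1))) :=
      ⟨i₀, rfl⟩
    rw [← hedges] at hr
    exact hr
  have hEq : (c.mapLe (posG_le G μ)).edges = c.edges := by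
    rw [SimpleGraph.Walk.mapLe, SimpleGraph.Walk.edges_map]
    have hid : ⇑(SimpleGraph.Hom.ofLE (posG_le G μ)) = id := rfl
    rw [hid, Sym2.map_id, List.map_id]
  rw [hEq] at hmem
  have hadj := c.adj_of_mem_edges hmem
  exact hadj.2.1 h0

end UniCyc


theorem symbolicPower_succ_eq {K : Type*} [Field K] {V : Type*} [Fintype V] (n : ℕ)
    (G : SimpleGraph V) (x : Fin (2 * n + 1) → V) (huni : HasUniqueOddCycle G n x)
    (I : Ideal (MvPolynomial V K)) (hI : I = edgeIdeal K G) :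
    symbolicPower I (n + 1) = I ^ (n + 1) + Ideal.span {∏ i, X (x i)} := by
  classical
  obtain ⟨hn, hinj, hadj, hcyc⟩ := huni
  refine le_antisymm ?_ ?_
  · intro f hf
    have hfwt : ∀ μ ∈ f.support, ∀ C : Set V, UniCyc.IsMinCover G C → n + 1 ≤ UniCyc.wt C μ := by
      intro μ hμ C hC
      have hp : UniCyc.PC K C ∈
          associatedPrimes (MvPolynomial V K) (MvPolynomial V K ⧸ I) :=
        UniCyc.isAssociatedPrime_PC hC hI
      have hle : symbolicPower I (n + 1) ≤ UniCyc.PC K C ^ (n + 1) := by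
        rw [symbolicPower]
        exact iInf₂_le _ hp
      exact UniCyc.mem_PC_pow_iff.mp (hle hf) μ hμ
    rw [← support_sum_monomial_coeff f]
    refine Ideal.sum_mem _ fun μ hμ => ?_
    rw [Submodule.add_eq_sup]
    by_cases hall : ∀ i, μ (x i) ≠ 0
    · exact Submodule.mem_sup_right (UniCyc.case_all_pos hinj hall _)
    · push_neg at hall
      obtain ⟨i₀, h0⟩ := hall
      have hcov : ∀ D : Set V, UniCyc.IsCover (UniCyc.posG G μ) D → n + 1 ≤ UniCyc.wt D μ := by
        intro D hD
        have hcovG : UniCyc.IsCover G (D ∪ {v | μ v = 0}) := by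
          intro p q hpq
          by_cases hp0 : μ p = 0
          · exact Or.inl (Or.inr hp0)
          · by_cases hq0 : μ q = 0
            · exact Or.inr (Or.inr hq0)
            · rcases hD ⟨hpq, hp0, hq0⟩ with h | h
              · exact Or.inl (Or.inl h)
              · exact Or.inr (Or.inl h)
        obtain ⟨C, hCsub, hCmin⟩ := UniCyc.exists_minCover_subset G _ hcovG
        have h1 := hfwt μ hμ C hCmin
        have h2 := UniCyc.wt_subset hCsub μ
        have h3 : UniCyc.wt (D ∪ {v | μ v = 0}) μ ≤ UniCyc.wt D μ := by
          refine UniCyc.wt_le_of_zero fun v hv => ?_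
          rcases hv with h | h
          · exact Or.inl h
          · exact Or.inr h
        omega
      have hmem := UniCyc.konig (n + 1) μ (UniCyc.posG G μ)
        (UniCyc.posG_acyclic ⟨hn, hinj, hadj, hcyc⟩ h0) hcov (coeff μ f)
      refine Submodule.mem_sup_left ?_
      have hle2 : edgeIdeal K (UniCyc.posG G μ) ^ (n + 1) ≤ I ^ (n + 1) := by
        rw [hI]
        exact Ideal.pow_right_mono (UniCyc.edgeIdeal_mono (UniCyc.posG_le G μ)) _
      exact hle2 hmem
  · rw [symbolicPower]
    refine le_iInf fun p => le_iInf fun hp => UniCyc.easy_direction hadj hI hp
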